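/- Conditions under which the MAR-based functional is unbiased (section 3.2): in the setting of the discrepancy formula (π > 0 and Γ + (1−Γ)·H > 0 almost surely, μ and M_MAR integrable), τ_a*(P) := E[M_MAR] equals τ_a(P) := E[μ] if any one of the following holds almost everywhere on {π > 0}: (i) M_R = M_S (the missing-at-random case); (ii) Γ = 0 (the outcome is completely unobserved initially); or (iii) (1−Γ)·(1−H) = 0 (the outcome is eventually observed on everyone). -/

import Mathlib

open MeasureTheory

/-- Conditions under which the MAR-based functional is unbiased (section 3.2):
in the setting of the discrepancy formula, `τ_a*(P) = E[M_MAR]` equals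
`τ_a(P) = E[μ]` if, a.e. on `{π > 0}`, (i) `M_R = M_S`, or (ii) `Γ = 0`, or
(iii) `(1−Γ)(1−H) = 0`. -/
theorem MAR_functional_unbiased_conditions
    {Ω : Type*} [MeasurableSpace Ω] (P : Measure Ω) [IsProbabilityMeasure P]
    {d : ℕ} (L : Ω → (Fin d → ℝ)) (A R S Y : Ω → ℝ)
    (hL : Measurable L) (hA : Measurable A) (hR : Measurable R)
    (hS : Measurable S) (hY : Integrable Y P)
    (hA01 : ∀ ω, A ω = 0 ∨ A ω = 1)
    (hR01 : ∀ ω, R ω = 0 ∨ R ω = 1)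
    (hS01 : ∀ ω, S ω = 0 ∨ S ω = 1)
    (hSR : ∀ ω, S ω * R ω = 0)
    (a : ℝ) (ha : a = 0 ∨ a = 1)
    (𝓛 : MeasurableSpace Ω) (h𝓛 : 𝓛 = MeasurableSpace.comap L inferInstance)
    (ind : Ω → ℝ) (hind : ind = fun ω => if A ω = a then (1:ℝ) else 0)
    -- arm-a nuisance random variables
    (π Γ H M_R M_S M_MAR : Ω → ℝ)
    (hπ_meas : Measurable[𝓛] π) (hπ_int : Integrable π P)
    (hΓ_meas : Measurable[𝓛] Γ) (hΓ_int : Integrable Γ P)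
    (hH_meas : Measurable[𝓛] H) (hH_int : Integrable H P)
    (hMR_meas : Measurable[𝓛] M_R) (hMR_int : Integrable M_R P)
    (hMS_meas : Measurable[𝓛] M_S) (hMS_int : Integrable M_S P)
    (hMMAR_meas : Measurable[𝓛] M_MAR) (hMMAR_int : Integrable M_MAR P)
    (hπ01 : ∀ ω, 0 ≤ π ω ∧ π ω ≤ 1)
    (hΓ01 : ∀ ω, 0 ≤ Γ ω ∧ Γ ω ≤ 1)
    (hH01 : ∀ ω, 0 ≤ H ω ∧ H ω ≤ 1)
    -- characterizations
    (hπ : P[ind | 𝓛] =ᵐ[P] π)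
    (hΓ : P[fun ω => ind ω * R ω | 𝓛] =ᵐ[P] fun ω => Γ ω * π ω)
    (hH : P[fun ω => ind ω * S ω | 𝓛]
      =ᵐ[P] fun ω => H ω * (P[fun ω' => ind ω' * (1 - R ω') | 𝓛]) ω)
    (hMR : P[fun ω => ind ω * R ω * Y ω | 𝓛] =ᵐ[P] fun ω => M_R ω * (Γ ω * π ω))
    (hMS : P[fun ω => ind ω * S ω * Y ω | 𝓛]
      =ᵐ[P] fun ω => M_S ω * (H ω * ((1 - Γ ω) * π ω)))
    (hMMAR : P[fun ω => ind ω * (R ω + S ω) * Y ω | 𝓛]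
      =ᵐ[P] fun ω => M_MAR ω * (P[fun ω' => ind ω' * (R ω' + S ω') | 𝓛]) ω)
    -- definition of μ, positivity and integrability
    (μ : Ω → ℝ) (hμdef : μ = fun ω => Γ ω * M_R ω + (1 - Γ ω) * M_S ω)
    (hπpos : ∀ᵐ ω ∂P, 0 < π ω)
    (hDpos : ∀ᵐ ω ∂P, 0 < Γ ω + (1 - Γ ω) * H ω)
    (hμ_int : Integrable μ P)
    -- any one of the three conditions, a.e. on {π > 0}
    (hcond : (∀ᵐ ω ∂P, 0 < π ω → M_R ω = M_S ω)
      ∨ (∀ᵐ ω ∂P, 0 < π ω → Γ ω = 0)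
      ∨ (∀ᵐ ω ∂P, 0 < π ω → (1 - Γ ω) * (1 - H ω) = 0)) :
    ∫ ω, M_MAR ω ∂P = ∫ ω, μ ω ∂P := by

  have hcond' : ∀ᵐ ω ∂P, 0 < π ω →
      (M_R ω = M_S ω ∨ Γ ω = 0 ∨ (1 - Γ ω) * (1 - H ω) = 0) := by
    rcases hcond with h | h | h <;> filter_upwards [h] with ω hω hp
    · exact Or.inl (hω hp)
    · exact Or.inr (Or.inl (hω hp))
    · exact Or.inr (Or.inr (hω hp))
  subst hμdef
  subst h𝓛
  -- measurability and bounds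
  have hind_meas : Measurable ind := by
    rw [hind]
    exact Measurable.ite (hA (measurableSet_singleton a)) measurable_const measurable_const
  have hind_bd : ∀ ω, ‖ind ω‖ ≤ 1 := by
    intro ω; rw [hind]; dsimp only; split <;> simp
  have hR_bd : ∀ ω, ‖R ω‖ ≤ 1 := by
    intro ω; rcases hR01 ω with h | h <;> simp [h]
  have hS_bd : ∀ ω, ‖S ω‖ ≤ 1 := by
    intro ω; rcases hS01 ω with h | h <;> simp [h]
  -- integrability of the bounded factors
  have hbint : ∀ (f : Ω → ℝ), Measurable f → (∀ ω, ‖f ω‖ ≤ 2) → Integrable f P := by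
    intro f hf hb
    exact (integrable_const (2:ℝ)).mono' hf.aestronglyMeasurable (ae_of_all _ fun ω => hb ω)
  have hIndR_b : ∀ ω, ‖ind ω * R ω‖ ≤ 2 := by
    intro ω; rw [norm_mul]
    nlinarith [hind_bd ω, hR_bd ω, norm_nonneg (ind ω), norm_nonneg (R ω)]
  have hIndS_b : ∀ ω, ‖ind ω * S ω‖ ≤ 2 := by
    intro ω; rw [norm_mul]
    nlinarith [hind_bd ω, hS_bd ω, norm_nonneg (ind ω), norm_nonneg (S ω)]
  have hIndRS_b : ∀ ω, ‖ind ω * (R ω + S ω)‖ ≤ 2 := by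
    intro ω; rw [norm_mul]
    have h1 : ‖R ω + S ω‖ ≤ 2 := by
      calc ‖R ω + S ω‖ ≤ ‖R ω‖ + ‖S ω‖ := norm_add_le _ _
        _ ≤ 2 := by linarith [hR_bd ω, hS_bd ω]
    nlinarith [hind_bd ω, norm_nonneg (ind ω), norm_nonneg (R ω + S ω)]
  have hInd : Integrable ind P := hbint ind hind_meas (fun ω => by linarith [hind_bd ω])
  have hIndR : Integrable (fun ω => ind ω * R ω) P :=
    hbint _ (hind_meas.mul hR) hIndR_b
  have hIndS : Integrable (fun ω => ind ω * S ω) P :=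
    hbint _ (hind_meas.mul hS) hIndS_b
  have hIndRY : Integrable (fun ω => ind ω * R ω * Y ω) P :=
    hY.bdd_mul (hind_meas.mul hR).aestronglyMeasurable (ae_of_all _ hIndR_b)
  have hIndSY : Integrable (fun ω => ind ω * S ω * Y ω) P :=
    hY.bdd_mul (hind_meas.mul hS).aestronglyMeasurable (ae_of_all _ hIndS_b)
  -- conditional expectation identities
  have hcAdd1 : P[fun ω => ind ω * (R ω + S ω) * Y ω | MeasurableSpace.comap L inferInstance]
      =ᵐ[P] P[fun ω => ind ω * R ω * Y ω | MeasurableSpace.comap L inferInstance] + P[fun ω => ind ω * S ω * Y ω | MeasurableSpace.comap L inferInstance] := by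
    have he : (fun ω => ind ω * (R ω + S ω) * Y ω)
        = (fun ω => ind ω * R ω * Y ω) + fun ω => ind ω * S ω * Y ω := by
      funext ω; simp only [Pi.add_apply]; ring
    rw [he]; exact condExp_add hIndRY hIndSY _
  have hcAdd2 : P[fun ω => ind ω * (R ω + S ω) | MeasurableSpace.comap L inferInstance]
      =ᵐ[P] P[fun ω => ind ω * R ω | MeasurableSpace.comap L inferInstance] + P[fun ω => ind ω * S ω | MeasurableSpace.comap L inferInstance] := by
    have he : (fun ω => ind ω * (R ω + S ω))
        = (fun ω => ind ω * R ω) + fun ω => ind ω * S ω := by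
      funext ω; simp only [Pi.add_apply]; ring
    rw [he]; exact condExp_add hIndR hIndS _
  have hcSub : P[fun ω => ind ω * (1 - R ω) | MeasurableSpace.comap L inferInstance]
      =ᵐ[P] P[ind | MeasurableSpace.comap L inferInstance] - P[fun ω => ind ω * R ω | MeasurableSpace.comap L inferInstance] := by
    have he : (fun ω => ind ω * (1 - R ω)) = ind - fun ω => ind ω * R ω := by
      funext ω; simp only [Pi.sub_apply]; ring
    rw [he]; exact condExp_sub hInd hIndR _
  refine integral_congr_ae ?_
  filter_upwards [hπ, hΓ, hH, hMR, hMS, hMMAR, hcAdd1, hcAdd2, hcSub, hπpos, hDpos, hcond']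
    with ω hπω hΓω hHω hMRω hMSω hMMARω h1ω h2ω hsω hπp hDp hcω
  simp only [Pi.add_apply] at h1ω h2ω
  simp only [Pi.sub_apply] at hsω
  have e := hMMARω
  rw [h1ω, hMRω, hMSω, h2ω, hΓω, hHω, hsω, hΓω, hπω] at e
  have hπne : π ω ≠ 0 := ne_of_gt hπp
  have hDne : Γ ω + (1 - Γ ω) * H ω ≠ 0 := ne_of_gt hDp
  have e1 : M_MAR ω * (Γ ω + (1 - Γ ω) * H ω)
      = Γ ω * M_R ω + (1 - Γ ω) * H ω * M_S ω :=
    mul_right_cancel₀ hπne (by linear_combination -e)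
  show M_MAR ω = Γ ω * M_R ω + (1 - Γ ω) * M_S ω
  rcases hcω hπp with hc | hc | hc
  · refine mul_right_cancel₀ hDne ?_
    linear_combination e1 + Γ ω * (1 - Γ ω) * (1 - H ω) * hc
  · refine mul_right_cancel₀ hDne ?_
    linear_combination e1 + (1 - Γ ω) * (1 - H ω) * (M_R ω - M_S ω) * hc
  · refine mul_right_cancel₀ hDne ?_
    linear_combination e1 + Γ ω * (M_R ω - M_S ω) * hc
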